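/- (Growth in a subgroup implies growth) Let A and B be nonempty finite subsets of a group G, H a subgroup of G, and π : G → G/H the quotient map onto left cosets. If B ∩ H is nonempty, then |π(A)| · |B ∩ H| ≤ |AB|. -/

import Mathlib

open scoped Classical

theorem stmt3 {G : Type*} [Group G] (H : Subgroup G) (A B : Finset G)
    (hA : A.Nonempty) (hB : ∃ b ∈ B, b ∈ H) :
    (A.image (QuotientGroup.mk (s := H) : G → G ⧸ H)).card *
        (B.filter (fun b => b ∈ H)).card ≤
      ((A ×ˢ B).image (fun p => p.1 * p.2)).card := by
  classical
  set π : G → G ⧸ H := QuotientGroup.mk (s := H) with hπ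
  set T := A.image π with hT
  set S := B.filter (fun b => b ∈ H) with hS
  have hrep : ∀ c ∈ T, ∃ a ∈ A, π a = c := by
    intro c hc
    simpa [hT, Finset.mem_image] using hc
  choose! rep hrepA hrepπ using hrep
  rw [← Finset.card_product]
  apply Finset.card_le_card_of_injOn (fun p => rep p.1 * p.2)
  · rintro ⟨c, b⟩ hp
    simp only [Finset.mem_coe, Finset.mem_product] at hp
    obtain ⟨hc, hb⟩ := hp
    simp only [hS, Finset.mem_filter] at hb
    exact Finset.mem_image.2 ⟨(rep c, b), Finset.mem_product.2 ⟨hrepA c hc, hb.1⟩, rfl⟩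
  · rintro ⟨c, b⟩ hp ⟨c', b'⟩ hp' heq
    simp only [Finset.mem_coe, Finset.mem_product] at hp hp'
    obtain ⟨hc, hb⟩ := hp
    obtain ⟨hc', hb'⟩ := hp'
    simp only [hS, Finset.mem_filter] at hb hb'
    simp only at heq
    have hcc : c = c' := by
      have h1 : π (rep c * b) = c :=
        ((QuotientGroup.eq (s := H)).2 (by simpa [mul_assoc] using H.inv_mem hb.2)).trans
          (hrepπ c hc)
      have h2 : π (rep c' * b') = c' :=
        ((QuotientGroup.eq (s := H)).2 (by simpa [mul_assoc] using H.inv_mem hb'.2)).trans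
          (hrepπ c' hc')
      rw [← h1, ← h2, heq]
    have hbb : b = b' := by
      rw [hcc] at heq
      exact mul_left_cancel heq
    simp [hcc, hbb]
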